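/- arXiv:2603.09459 — 2 statements merged into one kernel-verified Lean document; each statement's English description precedes it below -/
import Mathlib

section
/- Let X be a complete separable metric space and p ∈ (1,∞). Equip AC^p([a,b],X) with the metric d_p(c,c') := (∫_a^b d_X(c(t), c'(t))^p dt)^{1/p} (this is a genuine metric because continuous curves that agree Lebesgue-a.e. are equal). Then for every t ∈ [a,b], the evaluation map c ↦ c(t) is Borel measurable from (AC^p([a,b],X), d_p) to X. -/
set_option linter.unusedSectionVars false

open MeasureTheory ENNReal Set Filter Topology TopologicalSpace

noncomputable section

/-- The `L^p` (extended) distance between two maps with values in a metric space. -/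
def Dp {α : Type*} [MeasurableSpace α] {N : Type*} [MetricSpace N]
    (μ : Measure α) (p : ℝ≥0∞) (f g : α → N) : ℝ≥0∞ :=
  eLpNorm (fun x => dist (f x) (g x)) p μ

theorem Dp_self {α : Type*} [MeasurableSpace α] {N : Type*} [MetricSpace N]
    (μ : Measure α) (p : ℝ≥0∞) (f : α → N) : Dp μ p f f = 0 := by
  unfold Dp; simp only [dist_self]; exact eLpNorm_zero'

theorem Dp_comm {α : Type*} [MeasurableSpace α] {N : Type*} [MetricSpace N]
    (μ : Measure α) (p : ℝ≥0∞) (f g : α → N) : Dp μ p f g = Dp μ p g f := by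
  unfold Dp; simp only [dist_comm]

theorem Dp_triangle {α : Type*} [MeasurableSpace α] {N : Type*} [MetricSpace N]
    {μ : Measure α} {p : ℝ≥0∞} (hp : 1 ≤ p) {f g k : α → N}
    (hf : AEStronglyMeasurable f μ) (hg : AEStronglyMeasurable g μ)
    (hk : AEStronglyMeasurable k μ) :
    Dp μ p f k ≤ Dp μ p f g + Dp μ p g k := by
  have h1 : Dp μ p f k ≤
      eLpNorm ((fun x => dist (f x) (g x)) + fun x => dist (g x) (k x)) p μ := by
    refine eLpNorm_mono fun x => ?_
    simp only [Pi.add_apply, Real.norm_eq_abs]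
    rw [abs_of_nonneg dist_nonneg]
    exact (dist_triangle (f x) (g x) (k x)).trans (le_abs_self _)
  exact h1.trans (eLpNorm_add_le (hf.dist hg) (hg.dist hk) hp)

/-- Absolutely continuous curves: `c ∈ AC^p([a,b], X)`. -/
def MemACp {X : Type*} [PseudoMetricSpace X] (p : ℝ≥0∞) (a b : ℝ) (c : ℝ → X) : Prop :=
  ∃ m : ℝ → ℝ, MemLp m p (volume.restrict (Set.Icc a b)) ∧
    ∀ s t : ℝ, a ≤ s → s ≤ t → t ≤ b → dist (c s) (c t) ≤ ∫ r in s..t, m r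

/-- The space `AC^p([a,b],X)` of absolutely continuous curves (such curves are
automatically continuous on `[a,b]`; curves are normalized outside `[a,b]` by the
clamped value, so that a curve is determined by its restriction to `[a,b]`). -/
def ACpS (p : ℝ≥0∞) (a b : ℝ) (X : Type*) [MetricSpace X] : Type _ :=
  {c : ℝ → X // ContinuousOn c (Set.Icc a b) ∧ MemACp p a b c ∧
    ∀ t : ℝ, c t = c (max a (min t b))}

namespace ACpS

variable {p : ℝ≥0∞} {a b : ℝ} {X : Type*} [MetricSpace X]

/-- The pseudo-emetric `d_p` on `AC^p([a,b],X)`. -/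
def pem (p : ℝ≥0∞) (a b : ℝ) (X : Type*) [MetricSpace X] (hp : 1 ≤ p) :
    PseudoEMetricSpace (ACpS p a b X) where
  edist c c' := Dp (volume.restrict (Set.Icc a b)) p c.1 c'.1
  edist_self c := Dp_self _ p c.1
  edist_comm c c' := Dp_comm _ p c.1 c'.1
  edist_triangle c c' c'' :=
    Dp_triangle hp (c.2.1.aestronglyMeasurable measurableSet_Icc)
      (c'.2.1.aestronglyMeasurable measurableSet_Icc)
      (c''.2.1.aestronglyMeasurable measurableSet_Icc)

instance [hp : Fact (1 ≤ p)] : PseudoEMetricSpace (ACpS p a b X) := pem p a b X hp.out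
instance [Fact (1 ≤ p)] : MeasurableSpace (ACpS p a b X) := borel _
instance [Fact (1 ≤ p)] : BorelSpace (ACpS p a b X) := ⟨rfl⟩

theorem edist_def [Fact (1 ≤ p)] (c c' : ACpS p a b X) :
    edist c c' = Dp (volume.restrict (Set.Icc a b)) p c.1 c'.1 := rfl

end ACpS

theorem aux_meas_of_dist {α : Type*} [MeasurableSpace α] {X : Type*} [MetricSpace X]
    [MeasurableSpace X] [BorelSpace X] [TopologicalSpace.SeparableSpace X] {f : α → X}
    (h : ∀ x : X, Measurable fun a => dist (f a) x) : Measurable f := by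
  haveI : SecondCountableTopology X := UniformSpace.secondCountable_of_separable X
  have hb : TopologicalSpace.IsTopologicalBasis
      {s : Set X | ∃ x : X, ∃ r : ℝ, 0 < r ∧ s = Metric.ball x r} := by
    refine TopologicalSpace.isTopologicalBasis_of_isOpen_of_nhds ?_ ?_
    · rintro u ⟨x, r, -, rfl⟩; exact Metric.isOpen_ball
    · intro a u ha hu
      obtain ⟨r, hr, hsub⟩ := Metric.isOpen_iff.1 hu a ha
      exact ⟨Metric.ball a r, ⟨a, r, hr, rfl⟩, Metric.mem_ball_self hr, hsub⟩
  have heq : (‹MeasurableSpace X› : MeasurableSpace X) =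
      MeasurableSpace.generateFrom {s : Set X | ∃ x : X, ∃ r : ℝ, 0 < r ∧ s = Metric.ball x r} :=
    (BorelSpace.measurable_eq).trans hb.borel_eq_generateFrom
  rw [heq]
  refine measurable_generateFrom ?_
  rintro u ⟨x, r, -, rfl⟩
  have : f ⁻¹' Metric.ball x r = (fun a => dist (f a) x) ⁻¹' Iio r := by
    ext a; simp [Metric.mem_ball]
  rw [this]
  exact (h x) measurableSet_Iio

theorem aux_ae_zero {f : ℝ → ℝ} {a b : ℝ} (hab : a < b)
    (hf : ContinuousOn f (Set.Icc a b))
    (hae : f =ᵐ[volume.restrict (Set.Icc a b)] 0) :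
    ∀ t ∈ Set.Icc a b, f t = 0 := by
  intro t ht
  set S : Set ℝ := {s | s ∈ Set.Icc a b ∧ f s = 0} with hS
  have hzero : volume ({s | ¬ f s = 0} ∩ Set.Icc a b) = 0 := by
    have := hae
    rw [Filter.EventuallyEq, ae_iff, Measure.restrict_apply' measurableSet_Icc] at this
    simpa using this
  have htcl : t ∈ closure S := by
    by_contra hcl
    obtain ⟨ε, hε, hdisj⟩ : ∃ ε > 0, Metric.ball t ε ∩ S = ∅ := by
      rw [Metric.mem_closure_iff] at hcl
      push_neg at hcl
      obtain ⟨ε, hε, hb⟩ := hcl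
      refine ⟨ε, hε, Set.eq_empty_iff_forall_notMem.2 ?_⟩
      rintro s ⟨hsb, hsS⟩
      rw [Metric.mem_ball, dist_comm] at hsb
      exact absurd (hb s hsS) (not_le.2 hsb)
    set u := max a (t - ε/2) with hu
    set v := min b (t + ε/2) with hv
    have hau : a ≤ u := le_max_left _ _
    have hvb : v ≤ b := min_le_left _ _
    have hut : u ≤ t := max_le ht.1 (by linarith)
    have htv : t ≤ v := le_min ht.2 (by linarith)
    have huv : u < v := by
      rcases lt_or_eq_of_le ht.2 with h | h
      · exact lt_of_le_of_lt hut (lt_min h (by linarith))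
      · exact lt_of_lt_of_le (max_lt (h ▸ hab) (by linarith [h])) htv
    have hsub : Set.Ioo u v ⊆ {s | ¬ f s = 0} ∩ Set.Icc a b := by
      intro s hs
      have hsI : s ∈ Set.Icc a b := ⟨le_of_lt (lt_of_le_of_lt hau hs.1),
        le_of_lt (lt_of_lt_of_le hs.2 hvb)⟩
      have hsball : s ∈ Metric.ball t ε := by
        rw [Metric.mem_ball, Real.dist_eq, abs_lt]
        constructor
        · have : t - ε/2 ≤ u := le_max_right _ _
          linarith [hs.1]
        · have : v ≤ t + ε/2 := min_le_right _ _
          linarith [hs.2]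
      refine ⟨fun hfs => ?_, hsI⟩
      have : s ∈ Metric.ball t ε ∩ S := ⟨hsball, hsI, hfs⟩
      rw [hdisj] at this; exact this
    have h1 : volume (Set.Ioo u v) ≤ 0 := hzero ▸ measure_mono hsub
    rw [Real.volume_Ioo] at h1
    simp only [le_zero_iff, ENNReal.ofReal_eq_zero] at h1
    linarith
  have hne : (𝓝[S] t).NeBot := mem_closure_iff_nhdsWithin_neBot.1 htcl
  have h1 : Tendsto f (𝓝[S] t) (𝓝 (f t)) :=
    (hf t ht).mono (fun s hs => hs.1)
  have h2 : Tendsto f (𝓝[S] t) (𝓝 0) := by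
    refine Tendsto.congr' ?_ tendsto_const_nhds
    exact (eventually_nhdsWithin_of_forall (fun s hs => (hs.2).symm))
  exact tendsto_nhds_unique h1 h2

theorem aux_L1 {X : Type*} [MetricSpace X] {a b p : ℝ} (hp : 1 < p) {c c' : ℝ → X}
    (hc : ContinuousOn c (Set.Icc a b)) (hc' : ContinuousOn c' (Set.Icc a b)) :
    (∫ s in Set.Icc a b, dist (c s) (c' s)) ≤
      (eLpNorm (fun s => dist (c s) (c' s)) (ENNReal.ofReal p)
        (volume.restrict (Set.Icc a b))).toReal * ((volume (Set.Icc a b)) ^ (1 - 1/p)).toReal := by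
  set μ := volume.restrict (Set.Icc a b) with hμ
  set F := fun s => dist (c s) (c' s) with hFdef
  have hFc : ContinuousOn F (Set.Icc a b) := continuous_dist.comp_continuousOn (hc.prodMk hc')
  have hF : AEStronglyMeasurable F μ := hFc.aestronglyMeasurable measurableSet_Icc
  have hFnn : 0 ≤ᵐ[μ] F := Filter.Eventually.of_forall (fun s => dist_nonneg)
  obtain ⟨M, hM⟩ := isCompact_Icc.exists_bound_of_continuousOn hFc
  have hMae : ∀ᵐ s ∂μ, ‖F s‖ ≤ M := by
    filter_upwards [ae_restrict_mem measurableSet_Icc] with s hs using hM s hs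
  have hmem : MemLp F (ENNReal.ofReal p) μ := MemLp.of_bound hF M hMae
  have hfin : eLpNorm F (ENNReal.ofReal p) μ ≠ ∞ := hmem.2.ne
  have h1 : (∫ s in Set.Icc a b, F s) = (∫⁻ s, ENNReal.ofReal (F s) ∂μ).toReal :=
    integral_eq_lintegral_of_nonneg_ae hFnn hF
  have h2 : (∫⁻ s, ENNReal.ofReal (F s) ∂μ) = eLpNorm F 1 μ := by
    rw [eLpNorm_one_eq_lintegral_enorm]
    refine lintegral_congr (fun s => ?_)
    rw [← ofReal_norm_eq_enorm, Real.norm_eq_abs, abs_of_nonneg dist_nonneg]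
  have h3 : eLpNorm F 1 μ ≤ eLpNorm F (ENNReal.ofReal p) μ * μ Set.univ ^ (1 - 1/p) := by
    have := eLpNorm_le_eLpNorm_mul_rpow_measure_univ
      (p := 1) (q := ENNReal.ofReal p) (μ := μ) (f := F)
      (by rw [← ENNReal.ofReal_one]; exact ENNReal.ofReal_le_ofReal (by linarith)) hF
    simpa [ENNReal.toReal_ofReal (by linarith : (0:ℝ) ≤ p)] using this
  have hμuniv : μ Set.univ = volume (Set.Icc a b) := Measure.restrict_apply_univ _
  have hexp : (0:ℝ) ≤ 1 - 1/p := by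
    have : 1/p < 1 := by rw [div_lt_one (by linarith)]; linarith
    linarith
  have hRfin : eLpNorm F (ENNReal.ofReal p) μ * μ Set.univ ^ (1 - 1/p) ≠ ∞ := by
    refine ENNReal.mul_ne_top hfin ?_
    refine (ENNReal.rpow_lt_top_of_nonneg hexp ?_).ne
    rw [hμuniv, Real.volume_Icc]; exact ENNReal.ofReal_ne_top
  calc (∫ s in Set.Icc a b, F s) = (∫⁻ s, ENNReal.ofReal (F s) ∂μ).toReal := h1
    _ = (eLpNorm F 1 μ).toReal := by rw [h2]
    _ ≤ (eLpNorm F (ENNReal.ofReal p) μ * μ Set.univ ^ (1 - 1/p)).toReal :=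
        ENNReal.toReal_mono hRfin h3
    _ = (eLpNorm F (ENNReal.ofReal p) μ).toReal * ((volume (Set.Icc a b)) ^ (1 - 1/p)).toReal := by
        rw [ENNReal.toReal_mul, hμuniv]

/-- On `AC^p([a,b],X)` (`X` complete separable, `1 < p < ∞`), the distance
`d_p(c,c') = (∫_a^b d(c t, c' t)^p dt)^{1/p}` is a genuine metric (continuous curves that
agree Lebesgue-a.e. are equal), and for every `t ∈ [a,b]` the evaluation map `c ↦ c t`
is Borel measurable from `(AC^p([a,b],X), d_p)` to `X`. -/
theorem stmt2 {X : Type*} [MetricSpace X] [MeasurableSpace X] [BorelSpace X]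
    [CompleteSpace X] [TopologicalSpace.SeparableSpace X]
    (p a b : ℝ) (hp : 1 < p) (hab : a < b) [Fact (1 ≤ ENNReal.ofReal p)] :
    (∀ c c' : ACpS (ENNReal.ofReal p) a b X, edist c c' = 0 → c = c') ∧
    (∀ t ∈ Set.Icc a b, Measurable fun c : ACpS (ENNReal.ofReal p) a b X => c.1 t) := by
  set q := ENNReal.ofReal p with hq
  set μ := volume.restrict (Set.Icc a b) with hμ
  have hq0 : q ≠ 0 := by rw [hq, Ne, ENNReal.ofReal_eq_zero]; push_neg; linarith
  constructor
  · intro c c' h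
    rw [ACpS.edist_def] at h
    have hF : AEStronglyMeasurable (fun s => dist (c.1 s) (c'.1 s)) μ :=
      (continuous_dist.comp_continuousOn ((c.2.1).prodMk (c'.2.1))).aestronglyMeasurable
        measurableSet_Icc
    have hae : (fun s => dist (c.1 s) (c'.1 s)) =ᵐ[μ] 0 := (eLpNorm_eq_zero_iff hF hq0).1 h
    have key : ∀ s ∈ Set.Icc a b, dist (c.1 s) (c'.1 s) = 0 :=
      aux_ae_zero hab (continuous_dist.comp_continuousOn ((c.2.1).prodMk (c'.2.1))) hae
    apply Subtype.ext; funext s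
    have hmem : max a (min s b) ∈ Set.Icc a b :=
      ⟨le_max_left _ _, max_le hab.le (min_le_right _ _)⟩
    rw [c.2.2.2 s, c'.2.2.2 s]
    exact dist_eq_zero.1 (key _ hmem)
  · intro t ht
    refine aux_meas_of_dist (fun x => ?_)
    set u : ℕ → ℝ := fun n => max a (t - 1/(n+1)) with hu
    set v : ℕ → ℝ := fun n => min b (t + 1/(n+1)) with hv
    have hδpos : ∀ n : ℕ, (0:ℝ) < 1/(n+1) := fun n => by positivity
    have hau : ∀ n, a ≤ u n := fun n => le_max_left _ _
    have hvb : ∀ n, v n ≤ b := fun n => min_le_left _ _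
    have hut : ∀ n, u n ≤ t := fun n => max_le ht.1 (by linarith [hδpos n])
    have htv : ∀ n, t ≤ v n := fun n => le_min ht.2 (by linarith [hδpos n])
    have hul : ∀ n, t - 1/(n+1) ≤ u n := fun n => le_max_right _ _
    have hvl : ∀ n, v n ≤ t + 1/(n+1) := fun n => min_le_right _ _
    have huv : ∀ n, u n < v n := by
      intro n
      rcases lt_or_eq_of_le ht.2 with h | h
      · exact lt_of_le_of_lt (hut n) (lt_min h (by linarith [hδpos n]))
      · exact lt_of_lt_of_le (max_lt (h ▸ hab) (by linarith [hδpos n])) (htv n)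
    have hIccsub : ∀ n, Set.Icc (u n) (v n) ⊆ Set.Icc a b :=
      fun n => Set.Icc_subset_Icc (hau n) (hvb n)
    set g : ℕ → ACpS q a b X → ℝ :=
      fun n c => (∫ s in u n..v n, dist (c.1 s) x) / (v n - u n) with hg
    -- basic integrability facts
    have hcont : ∀ c : ACpS q a b X, ContinuousOn (fun s => dist (c.1 s) x) (Set.Icc a b) :=
      fun c => (continuous_id.dist continuous_const).comp_continuousOn c.2.1
    have hii : ∀ (n : ℕ) (c : ACpS q a b X),
        IntervalIntegrable (fun s => dist (c.1 s) x) volume (u n) (v n) := by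
      intro n c
      apply ContinuousOn.intervalIntegrable
      rw [Set.uIcc_of_le (huv n).le]
      exact (hcont c).mono (hIccsub n)
    have hdcont : ∀ c c' : ACpS q a b X,
        ContinuousOn (fun s => dist (c.1 s) (c'.1 s)) (Set.Icc a b) :=
      fun c c' => continuous_dist.comp_continuousOn ((c.2.1).prodMk (c'.2.1))
    have hdii : ∀ (n : ℕ) (c c' : ACpS q a b X),
        IntervalIntegrable (fun s => dist (c.1 s) (c'.1 s)) volume (u n) (v n) := by
      intro n c c'
      apply ContinuousOn.intervalIntegrable
      rw [Set.uIcc_of_le (huv n).le]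
      exact (hdcont c c').mono (hIccsub n)
    -- key Lipschitz-type bound
    have key : ∀ (n : ℕ) (c c' : ACpS q a b X), dist (g n c) (g n c') ≤
        (∫ s in Set.Icc a b, dist (c.1 s) (c'.1 s)) / (v n - u n) := by
      intro n c c'
      have hL : 0 < v n - u n := sub_pos.2 (huv n)
      have hsub : g n c - g n c' =
          (∫ s in u n..v n, (dist (c.1 s) x - dist (c'.1 s) x)) / (v n - u n) := by
        rw [hg]
        rw [intervalIntegral.integral_sub (hii n c) (hii n c'), sub_div]
      rw [Real.dist_eq, hsub, abs_div, abs_of_pos hL]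
      apply div_le_div_of_nonneg_right ?_ hL.le |>.trans_eq rfl
      have h1 : |∫ s in u n..v n, (dist (c.1 s) x - dist (c'.1 s) x)| ≤
          |∫ s in u n..v n, dist (c.1 s) (c'.1 s)| := by
        rw [← Real.norm_eq_abs (∫ s in u n..v n, (dist (c.1 s) x - dist (c'.1 s) x))]
        apply intervalIntegral.norm_integral_le_abs_of_norm_le ?_ (hdii n c c')
        filter_upwards with s
        exact abs_dist_sub_le _ _ _
      refine h1.trans ?_
      have h2 : (∫ s in u n..v n, dist (c.1 s) (c'.1 s)) ≤
          ∫ s in Set.Icc a b, dist (c.1 s) (c'.1 s) := by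
        rw [intervalIntegral.integral_of_le (huv n).le]
        apply setIntegral_mono_set
        · exact (hdcont c c').integrableOn_Icc
        · exact Filter.Eventually.of_forall (fun s => dist_nonneg)
        · exact ((Set.Ioc_subset_Icc_self).trans (hIccsub n)).eventuallyLE
      have h3 : (0:ℝ) ≤ ∫ s in u n..v n, dist (c.1 s) (c'.1 s) := by
        apply intervalIntegral.integral_nonneg (huv n).le
        intro s _; exact dist_nonneg
      rw [abs_of_nonneg h3]
      exact h2
    -- continuity of each g n
    have hgcont : ∀ n, Continuous (g n) := by
      intro n
      refine continuous_iff_continuousAt.2 (fun c₀ => ?_)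
      rw [ContinuousAt, tendsto_iff_dist_tendsto_zero]
      have hL : 0 < v n - u n := sub_pos.2 (huv n)
      have hbound : ∀ c : ACpS q a b X, (∫ s in Set.Icc a b, dist (c.1 s) (c₀.1 s)) ≤
          (edist c c₀).toReal * ((volume (Set.Icc a b)) ^ (1 - 1/p)).toReal := by
        intro c
        have := aux_L1 (a := a) (b := b) hp (c := c.1) (c' := c₀.1) c.2.1 c₀.2.1
        exact this
      have htend0 : Tendsto (fun c : ACpS q a b X => (edist c c₀).toReal) (𝓝 c₀) (𝓝 0) := by
        have h1 : Tendsto (fun c : ACpS q a b X => edist c c₀) (𝓝 c₀) (𝓝 0) := by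
          have : Continuous (fun c : ACpS q a b X => edist c c₀) :=
            continuous_id.edist continuous_const
          simpa [edist_self] using this.tendsto c₀
        have h2 : Tendsto ENNReal.toReal (𝓝 0) (𝓝 (0:ℝ≥0∞).toReal) :=
          ENNReal.tendsto_toReal (by simp)
        simpa [Function.comp_def] using h2.comp h1
      have htendI : Tendsto (fun c : ACpS q a b X =>
          (∫ s in Set.Icc a b, dist (c.1 s) (c₀.1 s))) (𝓝 c₀) (𝓝 0) := by
        apply squeeze_zero (fun c => integral_nonneg (fun s => dist_nonneg)) hbound
        have := htend0.mul_const (((volume (Set.Icc a b)) ^ (1 - 1/p)).toReal)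
        simpa using this
      apply squeeze_zero (fun c => dist_nonneg) (fun c => key n c c₀)
      have := htendI.div_const (v n - u n)
      simpa using this
    -- pointwise convergence
    have hptwise : ∀ c : ACpS q a b X,
        Tendsto (fun n => g n c) atTop (𝓝 (dist (c.1 t) x)) := by
      intro c
      rw [Metric.tendsto_atTop]
      intro ε hε
      obtain ⟨δ, hδ, hδprop⟩ := Metric.continuousWithinAt_iff.1 (c.2.1 t ht) (ε/2) (by linarith)
      obtain ⟨N, hN⟩ := exists_nat_one_div_lt hδ
      refine ⟨N, fun n hn => ?_⟩
      have hL : 0 < v n - u n := sub_pos.2 (huv n)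
      have hnN : (1:ℝ)/(n+1) ≤ 1/(N+1) := by
        apply one_div_le_one_div_of_le (by positivity)
        have : (N:ℝ) ≤ n := Nat.cast_le.2 hn
        linarith
      have hbd : ∀ s ∈ Set.uIoc (u n) (v n),
          ‖dist (c.1 s) x - dist (c.1 t) x‖ ≤ ε/2 := by
        intro s hs
        rw [Set.uIoc_of_le (huv n).le] at hs
        have hsI : s ∈ Set.Icc a b := hIccsub n ⟨hs.1.le, hs.2⟩
        have hst : dist s t < δ := by
          rw [Real.dist_eq, abs_lt]
          constructor
          · have := hul n; have := hs.1; linarith [lt_of_le_of_lt hnN hN]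
          · have := hvl n; have := hs.2; linarith [lt_of_le_of_lt hnN hN]
        have := hδprop hsI hst
        exact (abs_dist_sub_le _ _ _).trans this.le
      have hsub : g n c - dist (c.1 t) x =
          (∫ s in u n..v n, (dist (c.1 s) x - dist (c.1 t) x)) / (v n - u n) := by
        rw [hg, intervalIntegral.integral_sub (hii n c) intervalIntegrable_const,
          intervalIntegral.integral_const, smul_eq_mul, sub_div,
          mul_div_cancel_left₀ _ hL.ne']
      rw [Real.dist_eq, hsub, abs_div, abs_of_pos hL]
      have h1 : |∫ s in u n..v n, (dist (c.1 s) x - dist (c.1 t) x)| ≤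
          (ε/2) * |v n - u n| := by
        rw [← Real.norm_eq_abs]
        exact intervalIntegral.norm_integral_le_of_norm_le_const hbd
      rw [abs_of_pos hL] at h1
      calc |∫ s in u n..v n, (dist (c.1 s) x - dist (c.1 t) x)| / (v n - u n)
          ≤ ((ε/2) * (v n - u n)) / (v n - u n) := div_le_div_of_nonneg_right h1 hL.le |>.trans_eq rfl
        _ = ε/2 := by field_simp
        _ < ε := by linarith
    exact measurable_of_tendsto_metrizable (fun n => (hgcont n).measurable)
      (tendsto_pi_nhds.2 hptwise)
end
end

section
/- Let X be a complete metric space and let f : [a,b] → X (a < b reals) be Borel measurable with separable range such that ∫_a^b d_X(f(t), y₀) dt < ∞ for some y₀ ∈ X. Then: (i) essVar_X(f;(a,b)) < ∞ if and only if sup_{0<τ<b−a} ∫_a^{b−τ} d_X(f(t), f(t+τ))/τ dt < ∞; and (ii) if these quantities are finite, then for all a ≤ s < t ≤ b one has essVar_X(f;(s,t)) = sup_{0<τ<t−s} ∫_s^{t−τ} d_X(f(u), f(u+τ))/τ du. -/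
set_option linter.unusedSectionVars false
set_option maxHeartbeats 1000000

open MeasureTheory ENNReal Set Filter Topology TopologicalSpace

noncomputable section

/-- The essential variation of `f` on `s ⊆ ℝ`: the infimum of the variations of all maps
that agree with `f` Lebesgue-a.e. on `s`. -/
def essVar {N : Type*} [MetricSpace N] (f : ℝ → N) (s : Set ℝ) : ℝ≥0∞ :=
  ⨅ (g : ℝ → N) (_ : f =ᵐ[volume.restrict s] g), eVariationOn g s

namespace EssVarAux

variable {N : Type*} [MetricSpace N]

/-- If `L` has full measure in `Ioo s t`, every open subinterval meets `L`. -/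
lemma slice_nonempty {s t : ℝ} {L : Set ℝ}
    (hfull : volume (Set.Ioo s t \ L) = 0)
    {u v : ℝ} (hsu : s ≤ u) (huv : u < v) (hvt : v ≤ t) :
    (L ∩ Set.Ioo u v).Nonempty := by
  by_contra hcon
  rw [Set.not_nonempty_iff_eq_empty] at hcon
  have hsub : Set.Ioo u v ⊆ Set.Ioo s t \ L := by
    intro x hx
    refine ⟨⟨lt_of_le_of_lt hsu hx.1, lt_of_lt_of_le hx.2 hvt⟩, fun hxL => ?_⟩
    have : x ∈ (∅ : Set ℝ) := hcon ▸ Set.mem_inter hxL hx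
    exact this
  have h0 : volume (Set.Ioo u v) = 0 := measure_mono_null hsub hfull
  rw [Real.volume_Ioo] at h0
  have : v - u ≤ 0 := by
    by_contra h
    push_neg at h
    simp [ENNReal.ofReal_eq_zero] at h0
    linarith
  linarith

lemma nebot_left {s t : ℝ} {L : Set ℝ} (hfull : volume (Set.Ioo s t \ L) = 0)
    {x : ℝ} (hx : x ∈ Set.Ioo s t) : (𝓝[L ∩ Set.Iio x] x).NeBot := by
  rw [← mem_closure_iff_nhdsWithin_neBot]
  rw [Metric.mem_closure_iff]
  intro ε hε
  obtain ⟨y, hyL, hy⟩ := slice_nonempty hfull (le_max_left s (x - ε))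
    (by rcases max_cases s (x - ε) with ⟨h1, h2⟩ | ⟨h1, h2⟩ <;> rw [h1] <;> [exact hx.1; linarith])
    hx.2.le
  have h1 := hy.1
  have h3 := hy.2
  refine ⟨y, ⟨hyL, h3⟩, ?_⟩
  have h2 : x - ε ≤ max s (x - ε) := le_max_right _ _
  rw [Real.dist_eq, abs_of_pos (by linarith)]
  linarith

/-- Existence of a left limit along `L` at any point of `Ioo s t`, when the variation
of `h` on `L` is finite. -/
lemma exists_left_lim [CompleteSpace N] {h : ℝ → N} {s t : ℝ} {L : Set ℝ}
    (hLsub : L ⊆ Set.Ioo s t) (hfull : volume (Set.Ioo s t \ L) = 0)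
    (hV : eVariationOn h L ≠ ∞) {x : ℝ} (hx : x ∈ Set.Ioo s t) :
    ∃ c : N, Tendsto h (𝓝[L ∩ Set.Iio x] x) (𝓝 c) := by
  have hnb : (𝓝[L ∩ Set.Iio x] x).NeBot := nebot_left hfull hx
  have hcauchy : Cauchy (Filter.map h (𝓝[L ∩ Set.Iio x] x)) := by
    rw [EMetric.cauchy_iff]
    refine ⟨Filter.map_neBot.ne, fun ε hε => ?_⟩
    set W : ℝ → ℝ≥0∞ := fun y => eVariationOn h (L ∩ Set.Icc s y) with hW
    have hWle : ∀ y, W y ≤ eVariationOn h L := fun y =>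
      eVariationOn.mono h Set.inter_subset_left
    set c : ℝ≥0∞ := ⨆ y ∈ L ∩ Set.Iio x, W y with hc
    have hcle : c ≤ eVariationOn h L := by
      refine iSup₂_le fun y _ => hWle y
    have hcne : c ≠ ∞ := fun hc' => hV (top_le_iff.mp (hc' ▸ hcle))
    -- choose y₀ with c < W y₀ + ε/2
    have hexy : ∃ y₀ ∈ L ∩ Set.Iio x, c < W y₀ + ε / 2 := by
      by_contra hcon
      push_neg at hcon
      obtain ⟨y₁, hy₁⟩ := slice_nonempty hfull (le_refl s) (hx.1) (hx.2.le)
      have hy₁' : y₁ ∈ L ∩ Set.Iio x := ⟨hy₁.1, hy₁.2.2⟩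
      have h1 := hcon y₁ hy₁'
      have hε2 : (0:ℝ≥0∞) < ε / 2 := ENNReal.div_pos hε.ne' (by norm_num)
      by_cases hεtop : ε = ⊤
      · have hd : ε / 2 = ⊤ := by
          rw [hεtop]
          exact ENNReal.top_div_of_ne_top (by simp)
        rw [hd, add_top, top_le_iff] at h1
        exact hcne h1
      by_cases hc0 : c = 0
      · rw [hc0, le_zero_iff, add_eq_zero] at h1
        exact hε2.ne' h1.2
      · have hle : ∀ y ∈ L ∩ Set.Iio x, W y ≤ c - ε / 2 := fun y hy =>
          ENNReal.le_sub_of_add_le_right (by simp [ENNReal.div_eq_top, hεtop]) (hcon y hy)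
        have : c ≤ c - ε / 2 := by
          rw [hc]
          exact iSup₂_le hle
        have hlt : c - ε / 2 < c :=
          ENNReal.sub_lt_self hcne hc0 hε2.ne'
        exact absurd this (not_le.mpr hlt)
    obtain ⟨y₀, hy₀mem, hy₀⟩ := hexy
    refine ⟨h '' (L ∩ Set.Ioo y₀ x), ?_, ?_⟩
    · apply Filter.image_mem_map
      have : L ∩ Set.Ioo y₀ x = (L ∩ Set.Iio x) ∩ Set.Ioi y₀ := by
        ext z; constructor
        · rintro ⟨hz1, hz2⟩; exact ⟨⟨hz1, hz2.2⟩, hz2.1⟩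
        · rintro ⟨⟨hz1, hz2⟩, hz3⟩; exact ⟨hz1, hz3, hz2⟩
      rw [this]
      exact inter_mem_nhdsWithin _ (Ioi_mem_nhds hy₀mem.2)
    · rintro p ⟨y, hy, rfl⟩ q ⟨z, hz, rfl⟩
      -- wlog y ≤ z
      have key : ∀ y z : ℝ, y ∈ L ∩ Set.Ioo y₀ x → z ∈ L ∩ Set.Ioo y₀ x → y ≤ z →
          edist (h y) (h z) < ε := by
        intro y z hy hz hyz
        have h1 : W y₀ + eVariationOn h (L ∩ Set.Icc y₀ z) = W z :=
          eVariationOn.Icc_add_Icc h (le_of_lt (hLsub hy₀mem.1).1) (hy.2.1.le.trans hyz)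
            hy₀mem.1
        have h2 : W z ≤ c := le_iSup₂_of_le z ⟨hz.1, hz.2.2⟩ le_rfl
        have h3 : eVariationOn h (L ∩ Set.Icc y₀ z) < ε / 2 := by
          have := h1.le.trans (h2.trans hy₀.le)
          have hWy₀ : W y₀ ≠ ∞ := fun hc' => hV (top_le_iff.mp (hc' ▸ hWle y₀))
          rw [ENNReal.add_le_add_iff_left hWy₀] at this
          rcases this.lt_or_eq with h | h
          · exact h
          · -- equality case : still need strict; use c < W y₀ + ε/2 gives strict via h1 h2
            have : W z < W y₀ + ε / 2 := lt_of_le_of_lt h2 hy₀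
            rw [← h1, ENNReal.add_lt_add_iff_left hWy₀] at this
            exact this
        have h4 : edist (h y) (h z) ≤ eVariationOn h (L ∩ Set.Icc y₀ z) := by
          apply eVariationOn.edist_le h
          · exact ⟨hy.1, hy.2.1.le, hyz⟩
          · exact ⟨hz.1, hz.2.1.le, le_rfl⟩
        calc edist (h y) (h z) ≤ _ := h4
          _ < ε / 2 := h3
          _ ≤ ε := ENNReal.half_le_self
      rcases le_total y z with hyz | hzy
      · exact key y z hy hz hyz
      · rw [edist_comm]; exact key z y hz hy hzy
  obtain ⟨c, hc⟩ := CompleteSpace.complete hcauchy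
  exact ⟨c, hc⟩

/-- Extension of a function of bounded variation on a full-measure subset of `Ioo s t`
to a function on `Ioo s t` with no greater variation. -/
lemma exists_extension [CompleteSpace N] (h : ℝ → N) {s t : ℝ} (_hst : s < t) (L : Set ℝ)
    (hLsub : L ⊆ Set.Ioo s t) (hfull : volume (Set.Ioo s t \ L) = 0) :
    ∃ g : ℝ → N, (∀ x, x ∉ Set.Ioo s t \ L → g x = h x) ∧
      eVariationOn g (Set.Ioo s t) ≤ eVariationOn h L := by
  by_cases hV : eVariationOn h L = ∞
  · exact ⟨h, fun x _ => rfl, by rw [hV]; exact le_top⟩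
  classical
  have hNE : Nonempty N := ⟨h 0⟩
  set g : ℝ → N := fun x => if x ∈ Set.Ioo s t \ L then limUnder (𝓝[L ∩ Set.Iio x] x) h
    else h x with hg
  have hgeq : ∀ x, x ∉ Set.Ioo s t \ L → g x = h x := fun x hx => by
    simp only [hg]
    rw [if_neg hx]
  have hgL : ∀ x ∈ L, g x = h x := fun x hx => hgeq x (fun hc => hc.2 hx)
  have hgtend : ∀ x ∈ Set.Ioo s t \ L, Tendsto h (𝓝[L ∩ Set.Iio x] x) (𝓝 (g x)) := by
    intro x hx
    obtain ⟨c, hc⟩ := exists_left_lim hLsub hfull hV hx.1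
    have hnb : (𝓝[L ∩ Set.Iio x] x).NeBot := nebot_left hfull hx.1
    have hgx : g x = c := by
      rw [hg]
      simp only [hx, if_true]
      exact hc.limUnder_eq
    rw [hgx]; exact hc
  refine ⟨g, hgeq, ?_⟩
  have main : ∀ (n : ℕ) (u : ℕ → ℝ), Monotone u → (∀ i, u i ∈ Set.Ioo s t) →
      ∀ ε : ℝ, 0 < ε → ∃ y : ℕ → ℝ, Monotone y ∧ (∀ i, y i ∈ L) ∧ (∀ i, y i ≤ u i) ∧
        (∀ i ≤ n, dist (g (u i)) (h (y i)) ≤ ε) := by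
    intro n u hu hmem ε hε
    induction n with
    | zero =>
      have hpick : ∃ z ∈ L, z ≤ u 0 ∧ dist (g (u 0)) (h z) ≤ ε := by
        by_cases h0 : u 0 ∈ L
        · exact ⟨u 0, h0, le_rfl, by rw [hgL _ h0, dist_self]; exact hε.le⟩
        · have hx : u 0 ∈ Set.Ioo s t \ L := ⟨hmem 0, h0⟩
          have hnb := nebot_left hfull (hmem 0)
          have htd := hgtend _ hx
          have hball : h ⁻¹' (Metric.ball (g (u 0)) ε) ∈ 𝓝[L ∩ Set.Iio (u 0)] (u 0) :=
            htd (Metric.ball_mem_nhds _ hε)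
          obtain ⟨z, hz1, hz2, hz3⟩ :=
            Filter.nonempty_of_mem (Filter.inter_mem hball self_mem_nhdsWithin)
          refine ⟨z, hz2, hz3.le, ?_⟩
          rw [dist_comm]
          exact (Metric.mem_ball.mp hz1).le
      obtain ⟨z, hzL, hzu, hzd⟩ := hpick
      refine ⟨fun _ => z, monotone_const, fun _ => hzL, fun i => hzu.trans (hu (Nat.zero_le i)),
        fun i hi => ?_⟩
      interval_cases i
      exact hzd
    | succ n ih =>
      obtain ⟨y, hymon, hyL, hyle, hyd⟩ := ih
      have hpick : ∃ z ∈ L, y n ≤ z ∧ z ≤ u (n+1) ∧ dist (g (u (n+1))) (h z) ≤ ε := by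
        rcases eq_or_lt_of_le (hu (Nat.le_succ n)) with heq | hlt
        · exact ⟨y n, hyL n, le_rfl, (hyle n).trans (hu (Nat.le_succ n)),
            by rw [← heq]; exact hyd n le_rfl⟩
        · by_cases hmemL : u (n+1) ∈ L
          · exact ⟨u (n+1), hmemL, (hyle n).trans (le_of_lt hlt), le_rfl,
              by rw [hgL _ hmemL, dist_self]; exact hε.le⟩
          · have hx : u (n+1) ∈ Set.Ioo s t \ L := ⟨hmem _, hmemL⟩
            have hnb := nebot_left hfull (hmem (n+1))
            have htd := hgtend _ hx
            have hball : h ⁻¹' (Metric.ball (g (u (n+1))) ε)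
                ∈ 𝓝[L ∩ Set.Iio (u (n+1))] (u (n+1)) := htd (Metric.ball_mem_nhds _ hε)
            have hIoi : Set.Ioi (u n) ∈ 𝓝[L ∩ Set.Iio (u (n+1))] (u (n+1)) :=
              nhdsWithin_le_nhds (Ioi_mem_nhds hlt)
            obtain ⟨z, ⟨hz1, hz2⟩, hz3, hz4⟩ :=
              Filter.nonempty_of_mem (Filter.inter_mem (Filter.inter_mem hball hIoi)
                self_mem_nhdsWithin)
            refine ⟨z, hz3, (hyle n).trans hz2.le, hz4.le, ?_⟩
            rw [dist_comm]
            exact (Metric.mem_ball.mp hz1).le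
      obtain ⟨z, hzL, hzy, hzu, hzd⟩ := hpick
      refine ⟨fun i => if i ≤ n then y i else z, ?_, ?_, ?_, ?_⟩
      · intro i j hij
        by_cases hi : i ≤ n <;> by_cases hj : j ≤ n
        · simpa [hi, hj] using hymon hij
        · simpa [hi, hj] using (hymon hi).trans hzy
        · omega
        · simp [hi, hj]
      · intro i
        by_cases hi : i ≤ n <;> simp [hi, hyL, hzL]
      · intro i
        by_cases hi : i ≤ n
        · simpa [hi] using hyle i
        · simpa [hi] using hzu.trans (hu (by omega))
      · intro i hi
        by_cases hi' : i ≤ n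
        · simpa [hi'] using hyd i hi'
        · have : i = n + 1 := by omega
          subst this
          simpa [hi'] using hzd
  apply iSup_le
  rintro ⟨n, u, hu, hmem⟩
  refine ENNReal.le_of_forall_pos_le_add fun δ hδ _ => ?_
  set ε : ℝ := (δ : ℝ) / (2 * n + 2) with hεdef
  have hδR : (0:ℝ) < (δ:ℝ) := hδ
  have hεpos : 0 < ε := by positivity
  obtain ⟨y, hymon, hyL, hyle, hyd⟩ := main n u hu hmem ε hεpos
  have hsum : ∀ i, i < n → edist (g (u (i+1))) (g (u i))
      ≤ edist (h (y (i+1))) (h (y i)) + ENNReal.ofReal (2 * ε) := by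
    intro i hi
    have h1 := hyd (i+1) (by omega)
    have h2 := hyd i (by omega)
    have hd : dist (g (u (i+1))) (g (u i)) ≤ dist (h (y (i+1))) (h (y i)) + 2 * ε := by
      calc dist (g (u (i+1))) (g (u i))
          ≤ dist (g (u (i+1))) (h (y (i+1))) + dist (h (y (i+1))) (h (y i))
            + dist (h (y i)) (g (u i)) := dist_triangle4 _ _ _ _
        _ ≤ ε + dist (h (y (i+1))) (h (y i)) + ε := by
            have h2' : dist (h (y i)) (g (u i)) ≤ ε := by rw [dist_comm]; exact h2
            gcongr
        _ = dist (h (y (i+1))) (h (y i)) + 2 * ε := by ring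
    rw [edist_dist, edist_dist]
    calc ENNReal.ofReal (dist (g (u (i+1))) (g (u i)))
        ≤ ENNReal.ofReal (dist (h (y (i+1))) (h (y i)) + 2 * ε) := ENNReal.ofReal_le_ofReal hd
      _ ≤ ENNReal.ofReal (dist (h (y (i+1))) (h (y i))) + ENNReal.ofReal (2 * ε) :=
          ENNReal.ofReal_add_le
  calc ∑ i ∈ Finset.range n, edist (g (u (i+1))) (g (u i))
      ≤ ∑ i ∈ Finset.range n, (edist (h (y (i+1))) (h (y i)) + ENNReal.ofReal (2 * ε)) := by
        refine Finset.sum_le_sum fun i hi => ?_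
        exact hsum i (Finset.mem_range.mp hi)
    _ = (∑ i ∈ Finset.range n, edist (h (y (i+1))) (h (y i)))
        + n * ENNReal.ofReal (2 * ε) := by
        rw [Finset.sum_add_distrib, Finset.sum_const, Finset.card_range, nsmul_eq_mul]
    _ ≤ eVariationOn h L + n * ENNReal.ofReal (2 * ε) :=
        add_le_add_left (eVariationOn.sum_le (f := h) (n := n) hymon hyL) _
    _ ≤ eVariationOn h L + δ := by
        refine add_le_add_right ?_ _
        have h2ε : (0:ℝ) ≤ 2 * ε := by positivity
        have : (n : ℝ≥0∞) * ENNReal.ofReal (2 * ε) = ENNReal.ofReal (n * (2 * ε)) := by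
          rw [ENNReal.ofReal_mul (by positivity : (0:ℝ) ≤ (n:ℝ))]
          simp
        rw [this]
        have hle : (n : ℝ) * (2 * ε) ≤ (δ : ℝ) := by
          have h2n : (0:ℝ) < 2 * (n:ℝ) + 2 := by positivity
          have heq : (n:ℝ) * (2 * ε) = (δ:ℝ) * ((2 * n) / (2 * n + 2)) := by
            rw [hεdef]; field_simp
          rw [heq]
          nth_rewrite 2 [← mul_one (δ:ℝ)]
          refine mul_le_mul_of_nonneg_left ?_ hδR.le
          rw [div_le_one h2n]
          linarith
        calc ENNReal.ofReal ((n:ℝ) * (2 * ε)) ≤ ENNReal.ofReal (δ:ℝ) :=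
              ENNReal.ofReal_le_ofReal hle
          _ = (δ : ℝ≥0∞) := ENNReal.ofReal_coe_nnreal

/-- Almost every point of `Ioo a b` is a metric Lebesgue point of `f'`. -/
lemma leb_points [MeasurableSpace N] [BorelSpace N] {f' : ℝ → N} (hm : Measurable f')
    {a b : ℝ} (hab : a < b) {c : Set N} (hc : c.Countable)
    (hcd : f' '' Set.Icc a b ⊆ closure c)
    (hint : ∀ e ∈ c, Integrable ((Set.Icc a b).indicator fun y => dist (f' y) e) volume) :
    ∀ᵐ x, x ∈ Set.Ioo a b → ∀ ε : ℝ, 0 < ε → ∀ᶠ τ in 𝓝[>] (0:ℝ),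
      (∫ y in x..(x + τ), dist (f' y) (f' x)) ≤ ε * τ := by
  have hleb : ∀ᵐ x : ℝ, ∀ e (_ : e ∈ c), Tendsto (fun r : ℝ =>
      ⨍ y in Metric.closedBall x r, ‖((Set.Icc a b).indicator fun y => dist (f' y) e) y
        - ((Set.Icc a b).indicator fun y => dist (f' y) e) x‖) (𝓝[>] 0) (𝓝 0) := by
    rw [MeasureTheory.ae_ball_iff hc]
    intro e he
    filter_upwards [IsUnifLocDoublingMeasure.ae_tendsto_average_norm_sub (volume : Measure ℝ)
      ((hint e he).locallyIntegrable) 1] with x hx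
    exact hx (fun _ : ℝ => x) id tendsto_id
      (by filter_upwards [self_mem_nhdsWithin] with j (hj : (0:ℝ) < j)
          simp [Metric.mem_closedBall, hj.le])
  filter_upwards [hleb] with x hx hxI ε hε
  have hxab : x ∈ Set.Icc a b := ⟨hxI.1.le, hxI.2.le⟩
  obtain ⟨e, he, hed⟩ : ∃ e ∈ c, dist (f' x) e < ε / 4 := by
    have : f' x ∈ closure c := hcd ⟨x, hxab, rfl⟩
    exact Metric.mem_closure_iff.mp this (ε / 4) (by positivity)
  set v : ℝ → ℝ := (Set.Icc a b).indicator fun y => dist (f' y) e with hvdef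
  have hvint : Integrable v volume := hint e he
  have hted := hx e he
  have h1 : ∀ᶠ τ in 𝓝[>] (0:ℝ),
      (⨍ y in Metric.closedBall x τ, ‖v y - v x‖) < ε / 8 :=
    hted.eventually_lt_const (by positivity)
  have h2 : Set.Ioo (0:ℝ) (b - x) ∈ 𝓝[>] (0:ℝ) :=
    Ioo_mem_nhdsGT_of_mem ⟨le_rfl, by linarith [hxI.2]⟩
  filter_upwards [h1, h2] with τ havg hτmem
  have hτ0 : 0 < τ := hτmem.1
  have hxτb : x + τ ≤ b := by linarith [hτmem.2]
  have hIsub : Set.Icc x (x + τ) ⊆ Set.Icc a b :=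
    Set.Icc_subset_Icc hxI.1.le hxτb
  have hvx : v x = dist (f' x) e := by rw [hvdef, Set.indicator_of_mem hxab]
  -- pointwise bound on [x, x+τ]
  have hpt : ∀ y ∈ Set.Icc x (x + τ), dist (f' y) (f' x) ≤ ‖v y - v x‖ + 2 * dist (f' x) e := by
    intro y hy
    have hyab : y ∈ Set.Icc a b := hIsub hy
    have hvy : v y = dist (f' y) e := by rw [hvdef, Set.indicator_of_mem hyab]
    have : dist (f' y) (f' x) ≤ dist (f' y) e + dist (f' x) e := dist_triangle_right _ _ _
    have h4 : dist (f' y) e ≤ ‖v y - v x‖ + dist (f' x) e := by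
      rw [← hvy, ← hvx]
      calc v y = (v y - v x) + v x := by ring
        _ ≤ ‖v y - v x‖ + v x := by
            have := le_abs_self (v y - v x)
            rw [Real.norm_eq_abs]
            linarith
    linarith
  -- integrability
  have hvball : IntegrableOn (fun y => ‖v y - v x‖) (Metric.closedBall x τ) volume := by
    exact ((hvint.integrableOn.sub ((integrableOn_const_iff).mpr (Or.inr (by
      rw [Real.closedBall_eq_Icc]; exact measure_Icc_lt_top)))).norm)
  have hvIcc : IntegrableOn (fun y => ‖v y - v x‖) (Set.Icc x (x + τ)) volume :=
    hvball.mono_set (by rw [Real.closedBall_eq_Icc]; exact Set.Icc_subset_Icc (by linarith) le_rfl)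
  have hconst : IntegrableOn (fun _ : ℝ => 2 * dist (f' x) e) (Set.Icc x (x + τ)) volume :=
    (integrableOn_const_iff).mpr (Or.inr measure_Icc_lt_top)
  have hbnd : IntegrableOn (fun y => ‖v y - v x‖ + 2 * dist (f' x) e)
      (Set.Icc x (x + τ)) volume := hvIcc.add hconst
  have hdint : IntegrableOn (fun y => dist (f' y) (f' x)) (Set.Icc x (x + τ)) volume := by
    refine Integrable.mono' hbnd
      (((continuous_id.dist continuous_const).measurable.comp hm).aestronglyMeasurable) ?_
    refine ae_restrict_of_forall_mem measurableSet_Icc fun y hy => ?_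
    rw [Real.norm_eq_abs, abs_of_nonneg dist_nonneg]
    exact hpt y hy
  -- main chain
  have hii1 : IntervalIntegrable (fun y => dist (f' y) (f' x)) volume x (x + τ) := by
    rw [intervalIntegrable_iff_integrableOn_Icc_of_le (by linarith)]
    exact hdint
  have hii2 : IntervalIntegrable (fun y => ‖v y - v x‖ + 2 * dist (f' x) e) volume x (x + τ) := by
    rw [intervalIntegrable_iff_integrableOn_Icc_of_le (by linarith)]
    exact hbnd
  have hii3 : IntervalIntegrable (fun y => ‖v y - v x‖) volume x (x + τ) := by
    rw [intervalIntegrable_iff_integrableOn_Icc_of_le (by linarith)]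
    exact hvIcc
  have hii4 : IntervalIntegrable (fun _ : ℝ => 2 * dist (f' x) e) volume x (x + τ) := by
    rw [intervalIntegrable_iff_integrableOn_Icc_of_le (by linarith)]
    exact hconst
  have step1 : (∫ y in x..(x + τ), dist (f' y) (f' x))
      ≤ ∫ y in x..(x + τ), (‖v y - v x‖ + 2 * dist (f' x) e) :=
    intervalIntegral.integral_mono_on (by linarith) hii1 hii2 hpt
  have step2 : (∫ y in x..(x + τ), (‖v y - v x‖ + 2 * dist (f' x) e))
      = (∫ y in x..(x + τ), ‖v y - v x‖) + (2 * dist (f' x) e) * τ := by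
    rw [intervalIntegral.integral_add hii3 hii4, intervalIntegral.integral_const,
      smul_eq_mul]
    ring
  have step3 : (∫ y in x..(x + τ), ‖v y - v x‖)
      ≤ ∫ y in Metric.closedBall x τ, ‖v y - v x‖ := by
    rw [intervalIntegral.integral_of_le (by linarith)]
    refine setIntegral_mono_set hvball ?_ ?_
    · exact ae_restrict_of_forall_mem (by rw [Real.closedBall_eq_Icc]; exact measurableSet_Icc)
        fun y _ => norm_nonneg _
    · refine HasSubset.Subset.eventuallyLE ?_
      rw [Real.closedBall_eq_Icc]
      exact Set.Ioc_subset_Icc_self.trans (Set.Icc_subset_Icc (by linarith) le_rfl)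
  have step4 : (∫ y in Metric.closedBall x τ, ‖v y - v x‖)
      = (2 * τ) * ⨍ y in Metric.closedBall x τ, ‖v y - v x‖ := by
    rw [setAverage_eq, Real.volume_real_closedBall (by positivity),
      smul_eq_mul]
    field_simp
  calc (∫ y in x..(x + τ), dist (f' y) (f' x))
      ≤ (∫ y in x..(x + τ), ‖v y - v x‖) + (2 * dist (f' x) e) * τ := by
        rw [← step2]; exact step1
    _ ≤ (2 * τ) * (⨍ y in Metric.closedBall x τ, ‖v y - v x‖) + (2 * dist (f' x) e) * τ := by
        rw [← step4]; exact add_le_add_left step3 _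
    _ ≤ (2 * τ) * (ε / 8) + (2 * (ε / 4)) * τ := by
        refine add_le_add (mul_le_mul_of_nonneg_left havg.le (by positivity)) ?_
        refine mul_le_mul_of_nonneg_right (by linarith) hτ0.le
    _ ≤ ε * τ := by nlinarith
  
/-- Easy direction: each difference-quotient integral is bounded by the variation of any
a.e.-representative. -/
lemma easy_dir {f' : ℝ → N} {s t : ℝ} (g : ℝ → N)
    (hg : f' =ᵐ[volume.restrict (Set.Ioo s t)] g) {τ : ℝ} (hτ : τ ∈ Set.Ioo (0:ℝ) (t - s)) :
    ∫⁻ u in Set.Icc s (t - τ), edist (f' u) (f' (u + τ)) / ENNReal.ofReal τ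
      ≤ eVariationOn g (Set.Ioo s t) := by
  set V := eVariationOn g (Set.Ioo s t) with hV
  by_cases hVtop : V = ∞
  · rw [hVtop]; exact le_top
  have hτ0 : 0 < τ := hτ.1
  have hτts : τ < t - s := hτ.2
  have hst : s < t := by linarith
  have hZ : volume ({x | ¬ f' x = g x} ∩ Set.Ioo s t) = 0 := by
    have h := hg
    rw [Filter.EventuallyEq, ae_iff, Measure.restrict_apply' measurableSet_Ioo] at h
    exact h
  set Vb : ℝ → ℝ≥0∞ := fun x => eVariationOn g (Set.Ioo s t ∩ Set.Icc s x) with hVbdef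
  have hVbmono : Monotone Vb := fun x y hxy =>
    eVariationOn.mono g (Set.inter_subset_inter_right _ (Set.Icc_subset_Icc_right hxy))
  have hVble : ∀ x, Vb x ≤ V := fun x => eVariationOn.mono g Set.inter_subset_left
  have hae1 : ∀ᵐ u ∂(volume.restrict (Set.Icc s (t - τ))), f' u = g u := by
    rw [ae_iff, Measure.restrict_apply' measurableSet_Icc]
    refine measure_mono_null (fun u hu => ?_)
      (measure_union_null (measure_singleton s) hZ :
        volume ({s} ∪ ({x | ¬ f' x = g x} ∩ Set.Ioo s t)) = 0)
    rcases eq_or_ne u s with rfl | hus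
    · exact Or.inl rfl
    · exact Or.inr ⟨hu.1, lt_of_le_of_ne hu.2.1 (Ne.symm hus),
        lt_of_le_of_lt hu.2.2 (by linarith)⟩
  have hae2 : ∀ᵐ u ∂(volume.restrict (Set.Icc s (t - τ))), f' (u + τ) = g (u + τ) := by
    rw [ae_iff, Measure.restrict_apply' measurableSet_Icc]
    have hpre : volume ((fun x : ℝ => x + τ) ⁻¹' ({x | ¬ f' x = g x} ∩ Set.Ioo s t)) = 0 := by
      rw [measure_preimage_add_right]
      exact hZ
    refine measure_mono_null (fun u hu => ?_)
      (measure_union_null (measure_singleton (t - τ)) hpre :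
        volume ({t - τ} ∪ ((fun x : ℝ => x + τ) ⁻¹' ({x | ¬ f' x = g x} ∩ Set.Ioo s t))) = 0)
    rcases eq_or_ne u (t - τ) with rfl | hus
    · exact Or.inl rfl
    · refine Or.inr ⟨hu.1, by simp only [Set.mem_Ioo]; constructor <;>
        [linarith [hu.2.1]; linarith [lt_of_le_of_ne hu.2.2 hus]]⟩
  have hae3 : ∀ᵐ u ∂(volume.restrict (Set.Icc s (t - τ))), u ∈ Set.Ioo s (t - τ) := by
    rw [ae_iff, Measure.restrict_apply' measurableSet_Icc]
    refine measure_mono_null (fun u hu => ?_)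
      ((measure_union_null (measure_singleton s) (measure_singleton (t - τ))) :
        volume ({s} ∪ {t - τ} : Set ℝ) = 0)
    have hu1 := hu.1
    have hu2 := hu.2
    simp only [Set.mem_Ioo, not_and_or, not_lt] at hu1
    rcases hu1 with h1 | h1
    · exact Or.inl (Set.mem_singleton_iff.mpr (le_antisymm h1 hu2.1))
    · exact Or.inr (Set.mem_singleton_iff.mpr (le_antisymm hu2.2 h1))
  have hmain : ∀ᵐ u ∂(volume.restrict (Set.Icc s (t - τ))),
      edist (f' u) (f' (u + τ)) / ENNReal.ofReal τ ≤ (Vb (u + τ) - Vb u) / ENNReal.ofReal τ := by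
    filter_upwards [hae1, hae2, hae3] with u h1 h2 h3
    have hu1 : u ∈ Set.Ioo s t := ⟨h3.1, by linarith [h3.2]⟩
    have hu2 : u + τ ∈ Set.Ioo s t := ⟨by linarith [h3.1], by linarith [h3.2]⟩
    rw [h1, h2]
    refine ENNReal.div_le_div_right ?_ _
    have hle : edist (g u) (g (u + τ)) ≤ eVariationOn g (Set.Ioo s t ∩ Set.Icc u (u + τ)) :=
      eVariationOn.edist_le g ⟨hu1, le_rfl, by linarith⟩ ⟨hu2, by linarith, le_rfl⟩
    have hadd : Vb u + eVariationOn g (Set.Ioo s t ∩ Set.Icc u (u + τ)) = Vb (u + τ) :=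
      eVariationOn.Icc_add_Icc g (le_of_lt hu1.1) (by linarith) hu1
    have hXeq : Vb (u + τ) - Vb u = eVariationOn g (Set.Ioo s t ∩ Set.Icc u (u + τ)) := by
      rw [← hadd, ENNReal.add_sub_cancel_left (ne_top_of_le_ne_top hVtop (hVble u))]
    rw [hXeq]
    exact hle
  have hVbmeas : Measurable Vb := hVbmono.measurable
  have hbound : (∫⁻ u in Set.Icc s (t - τ), (Vb (u + τ) - Vb u)) ≤ ENNReal.ofReal τ * V := by
    have hfin : (∫⁻ u in Set.Icc s (t - τ), Vb u) ≠ ∞ := by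
      refine ne_of_lt (lt_of_le_of_lt (lintegral_mono fun u => hVble u) ?_)
      rw [setLIntegral_const]
      exact ENNReal.mul_lt_top (lt_top_iff_ne_top.mpr hVtop)
        (by rw [Real.volume_Icc]; exact ofReal_lt_top)
    rw [lintegral_sub hVbmeas hfin (Eventually.of_forall fun u => hVbmono (by linarith))]
    have htrans : (∫⁻ u in Set.Icc s (t - τ), Vb (u + τ)) = ∫⁻ v in Set.Icc (s + τ) t, Vb v := by
      have hmp : MeasurePreserving (fun x : ℝ => x + τ) volume volume :=
        measurePreserving_add_right volume τ
      have hpre : (fun x : ℝ => x + τ) ⁻¹' (Set.Icc (s + τ) t) = Set.Icc s (t - τ) := by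
        ext x
        simp only [Set.mem_preimage, Set.mem_Icc]
        constructor <;> rintro ⟨h1, h2⟩ <;> constructor <;> linarith
      rw [← hpre]
      exact hmp.setLIntegral_comp_preimage measurableSet_Icc hVbmeas
    rw [htrans, tsub_le_iff_right]
    rcases le_or_gt (s + τ) (t - τ) with hcase | hcase
    · have hsplit : Set.Icc (s + τ) t = Set.Icc (s + τ) (t - τ) ∪ Set.Ioc (t - τ) t :=
        (Set.Icc_union_Ioc_eq_Icc hcase (by linarith)).symm
      rw [hsplit, lintegral_union measurableSet_Ioc
        (Set.disjoint_left.mpr fun x hx hx' => (not_lt.mpr hx.2) hx'.1)]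
      have hA : (∫⁻ u in Set.Icc (s + τ) (t - τ), Vb u) ≤ ∫⁻ u in Set.Icc s (t - τ), Vb u :=
        lintegral_mono_set (Set.Icc_subset_Icc_left (by linarith))
      have hB : (∫⁻ u in Set.Ioc (t - τ) t, Vb u) ≤ ENNReal.ofReal τ * V := by
        refine le_trans (lintegral_mono fun u => hVble u) ?_
        rw [setLIntegral_const, Real.volume_Ioc]
        rw [mul_comm]
        refine mul_le_mul_left (ENNReal.ofReal_le_ofReal (by linarith)) _
      calc (∫⁻ u in Set.Icc (s + τ) (t - τ), Vb u) + ∫⁻ u in Set.Ioc (t - τ) t, Vb u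
          ≤ (∫⁻ u in Set.Icc s (t - τ), Vb u) + ENNReal.ofReal τ * V := add_le_add hA hB
        _ = ENNReal.ofReal τ * V + ∫⁻ u in Set.Icc s (t - τ), Vb u := add_comm _ _
    · refine le_trans (le_trans (lintegral_mono fun u => hVble u) ?_) le_self_add
      rw [setLIntegral_const, Real.volume_Icc, mul_comm]
      refine mul_le_mul_left (ENNReal.ofReal_le_ofReal (by linarith)) _
  calc ∫⁻ u in Set.Icc s (t - τ), edist (f' u) (f' (u + τ)) / ENNReal.ofReal τ
      ≤ ∫⁻ u in Set.Icc s (t - τ), (Vb (u + τ) - Vb u) / ENNReal.ofReal τ :=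
        lintegral_mono_ae hmain
    _ = (∫⁻ u in Set.Icc s (t - τ), (Vb (u + τ) - Vb u)) / ENNReal.ofReal τ := by
        simp only [div_eq_mul_inv]
        exact lintegral_mul_const _
          (((hVbmeas.comp (measurable_add_const τ)).sub hVbmeas :
            Measurable fun u => Vb (u + τ) - Vb u))
    _ ≤ (ENNReal.ofReal τ * V) / ENNReal.ofReal τ :=
        ENNReal.div_le_div_right hbound _
    _ = V := by
        rw [mul_comm, mul_div_assoc]
        rw [ENNReal.div_self (ENNReal.ofReal_pos.mpr hτ0).ne' ENNReal.ofReal_ne_top, mul_one]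

/-- Key estimate: partition sums over metric Lebesgue points are bounded by the supremum of
the difference quotients. -/
lemma key_sum [MeasurableSpace N] [BorelSpace N] {f' : ℝ → N} (hm : Measurable f')
    (hsepr : TopologicalSpace.IsSeparable (Set.range f'))
    {a b s t : ℝ} (has : a ≤ s) (hst : s < t) (htb : t ≤ b)
    {c : Set N} (hcd : f' '' Set.Icc a b ⊆ closure c)
    {y₀ : N} (hintd : IntegrableOn (fun y => dist (f' y) y₀) (Set.Icc a b) volume)
    {Sr : ℝ} (hS : ∀ τ ∈ Set.Ioo (0:ℝ) (t - s),
      (∫ y in Set.Icc s (t - τ), dist (f' y) (f' (y + τ))) ≤ τ * Sr)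
    {L : Set ℝ} (hLI : L ⊆ Set.Ioo s t)
    (hLleb : ∀ x ∈ L, ∀ ε : ℝ, 0 < ε → ∀ᶠ τ in 𝓝[>] (0:ℝ),
      (∫ y in x..(x + τ), dist (f' y) (f' x)) ≤ ε * τ)
    (n : ℕ) (u : ℕ → ℝ) (hu : Monotone u) (huL : ∀ i, u i ∈ L) :
    ∑ i ∈ Finset.range n, dist (f' (u (i + 1))) (f' (u i)) ≤ Sr := by
  have hf'sm : StronglyMeasurable f' :=
    stronglyMeasurable_iff_measurable_separable.mpr ⟨hm, hsepr⟩
  have hφmeas : ∀ e : N, Measurable fun y => dist (f' y) e := fun e =>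
    (continuous_id.dist continuous_const).measurable.comp hm
  have hφint : ∀ e : N, IntegrableOn (fun y => dist (f' y) e) (Set.Icc a b) volume := by
    intro e
    refine Integrable.mono'
      ((hintd.add ((integrableOn_const_iff).mpr (Or.inr measure_Icc_lt_top)) :
        IntegrableOn (fun y => dist (f' y) y₀ + dist y₀ e) _ _))
      ((hφmeas e).aestronglyMeasurable) ?_
    refine ae_restrict_of_forall_mem measurableSet_Icc fun y _ => ?_
    rw [Real.norm_eq_abs, abs_of_nonneg dist_nonneg]
    exact dist_triangle _ _ _
  have hDsm : ∀ τ' : ℝ, StronglyMeasurable fun y => dist (f' y) (f' (y + τ')) := fun τ' =>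
    continuous_dist.comp_stronglyMeasurable
      (hf'sm.prodMk (hf'sm.comp_measurable (measurable_add_const τ')))
  refine _root_.le_of_forall_pos_le_add fun ε hε => ?_
  set ε' : ℝ := ε / (4 * n + 1) with hε'def
  have hε' : 0 < ε' := by positivity
  have huIn : u n ∈ Set.Ioo s t := hLI (huL n)
  have hev : ∀ᶠ τ in 𝓝[>] (0:ℝ),
      (∀ i ∈ Finset.range (n + 1),
        (∫ y in (u i)..(u i + τ), dist (f' y) (f' (u i))) ≤ ε' * τ) ∧
      τ ∈ Set.Ioo (0:ℝ) (min (t - u n) (t - s)) := by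
    refine Filter.Eventually.and ?_ ?_
    · rw [eventually_all_finset]
      exact fun i _ => hLleb (u i) (huL i) ε' hε'
    · exact Ioo_mem_nhdsGT_of_mem ⟨le_rfl, lt_min (by linarith [huIn.2]) (by linarith)⟩
  obtain ⟨τ, hτleb, hτmem⟩ := hev.exists
  have hτ0 : 0 < τ := hτmem.1
  obtain ⟨hτtun, hτts⟩ := lt_min_iff.mp hτmem.2
  have huiI : ∀ i, u i ∈ Set.Ioo s t := fun i => hLI (huL i)
  have hunt : ∀ i, i ≤ n → u i + τ ≤ t := fun i hi => by
    have h1 := hu hi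
    linarith
  have hIccab : ∀ p q : ℝ, s ≤ p → q ≤ t → Set.Icc p q ⊆ Set.Icc a b := fun p q hp hq =>
    Set.Icc_subset_Icc (by linarith) (by linarith)
  have hφii : ∀ e : N, ∀ p q : ℝ, s ≤ p → q ≤ t → p ≤ q →
      IntervalIntegrable (fun y => dist (f' y) e) volume p q := by
    intro e p q hp hq hpq
    rw [intervalIntegrable_iff_integrableOn_Icc_of_le hpq]
    exact (hφint e).mono_set (hIccab p q hp hq)
  have hDint : IntegrableOn (fun y => dist (f' y) (f' (y + τ))) (Set.Icc s (t - τ)) volume := by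
    have hb : IntegrableOn (fun y => dist (f' y) y₀ + dist (f' (y + τ)) y₀)
        (Set.Icc s (t - τ)) volume := by
      rw [← intervalIntegrable_iff_integrableOn_Icc_of_le (by linarith : s ≤ t - τ)]
      refine IntervalIntegrable.add (hφii y₀ s (t - τ) le_rfl (by linarith) (by linarith)) ?_
      have h0 := (hφii y₀ (s + τ) t (by linarith) le_rfl (by linarith)).comp_add_right τ
      have e1 : s + τ - τ = s := by ring
      rwa [e1] at h0
    refine Integrable.mono' hb ((hDsm τ).aestronglyMeasurable.restrict) ?_
    refine ae_restrict_of_forall_mem measurableSet_Icc fun y _ => ?_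
    rw [Real.norm_eq_abs, abs_of_nonneg dist_nonneg]
    exact dist_triangle_right _ _ _
  have hDii : ∀ p q, s ≤ p → q ≤ t - τ → p ≤ q →
      IntervalIntegrable (fun y => dist (f' y) (f' (y + τ))) volume p q := by
    intro p q hp hq hpq
    rw [intervalIntegrable_iff_integrableOn_Icc_of_le hpq]
    exact hDint.mono_set (Set.Icc_subset_Icc hp hq)
  have hunτ : u n ≤ t - τ := by linarith
  have main : ∀ i, i < n → τ * dist (f' (u (i + 1))) (f' (u i))
      ≤ 4 * ε' * τ + ∫ y in (u i)..(u (i + 1)), dist (f' y) (f' (y + τ)) := by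
    intro i hi
    obtain ⟨e, he, hed⟩ : ∃ e ∈ c, dist (f' (u (i + 1))) e < ε' :=
      Metric.mem_closure_iff.mp (hcd ⟨u (i + 1), ⟨by linarith [(huiI (i+1)).1],
        by linarith [(huiI (i+1)).2]⟩, rfl⟩) ε' hε'
    set φ : ℝ → ℝ := fun y => dist (f' y) e with hφdef
    have hA : ∀ j, j ≤ n → |(∫ y in (u j)..(u j + τ), φ y) - φ (u j) * τ| ≤ ε' * τ := by
      intro j hj
      have hφiij : IntervalIntegrable φ volume (u j) (u j + τ) :=
        hφii e (u j) (u j + τ) (huiI j).1.le (hunt j hj) (by linarith)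
      have hdiij : IntervalIntegrable (fun y => dist (f' y) (f' (u j))) volume
          (u j) (u j + τ) :=
        hφii (f' (u j)) (u j) (u j + τ) (huiI j).1.le (hunt j hj) (by linarith)
      have habsii : IntervalIntegrable (fun y => |φ y - φ (u j)|) volume (u j) (u j + τ) :=
        (hφiij.sub (intervalIntegrable_const)).abs
      have heq : (∫ y in (u j)..(u j + τ), φ y) - φ (u j) * τ
          = ∫ y in (u j)..(u j + τ), (φ y - φ (u j)) := by
        rw [intervalIntegral.integral_sub hφiij (intervalIntegrable_const),
          intervalIntegral.integral_const, smul_eq_mul]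
        ring
      rw [heq]
      calc |∫ y in (u j)..(u j + τ), (φ y - φ (u j))|
          ≤ ∫ y in (u j)..(u j + τ), |φ y - φ (u j)| :=
            intervalIntegral.abs_integral_le_integral_abs (by linarith)
        _ ≤ ∫ y in (u j)..(u j + τ), dist (f' y) (f' (u j)) := by
            refine intervalIntegral.integral_mono_on (by linarith) habsii hdiij fun y hy => ?_
            exact abs_dist_sub_le _ _ _
        _ ≤ ε' * τ := hτleb j (Finset.mem_range.mpr (by omega))
    have hii_xx' : IntervalIntegrable φ volume (u i) (u (i+1)) :=
      hφii e _ _ (huiI i).1.le (huiI (i+1)).2.le (hu (Nat.le_succ i))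
    have hii_x'x't : IntervalIntegrable φ volume (u (i+1)) (u (i+1) + τ) :=
      hφii e _ _ (huiI (i+1)).1.le (hunt (i+1) hi) (by linarith)
    have hii_xxt : IntervalIntegrable φ volume (u i) (u i + τ) :=
      hφii e _ _ (huiI i).1.le (hunt i (by omega)) (by linarith)
    have hii_xtx't : IntervalIntegrable φ volume (u i + τ) (u (i+1) + τ) :=
      hφii e _ _ (by linarith [(huiI i).1]) (hunt (i+1) hi)
        (by linarith [hu (Nat.le_succ i)])
    have hii_shift : IntervalIntegrable (fun y => φ (y + τ)) volume (u i) (u (i+1)) := by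
      have h0 := hii_xtx't.comp_add_right τ
      have e1 : u i + τ - τ = u i := by ring
      have e2 : u (i+1) + τ - τ = u (i+1) := by ring
      rwa [e1, e2] at h0
    have htel : (∫ y in (u i)..(u i + τ), φ y) - (∫ y in (u (i+1))..(u (i+1) + τ), φ y)
        = ∫ y in (u i)..(u (i+1)), (φ y - φ (y + τ)) := by
      have h1 := intervalIntegral.integral_add_adjacent_intervals hii_xx' hii_x'x't
      have h2 := intervalIntegral.integral_add_adjacent_intervals hii_xxt hii_xtx't
      have h3 : (∫ y in (u i + τ)..(u (i+1) + τ), φ y)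
          = ∫ y in (u i)..(u (i+1)), φ (y + τ) :=
        (intervalIntegral.integral_comp_add_right φ τ).symm
      have h4 := intervalIntegral.integral_sub hii_xx' hii_shift
      rw [h4]
      linarith [h1, h2, h3]
    have hmono : (∫ y in (u i)..(u (i+1)), (φ y - φ (y + τ)))
        ≤ ∫ y in (u i)..(u (i+1)), dist (f' y) (f' (y + τ)) := by
      refine intervalIntegral.integral_mono_on (hu (Nat.le_succ i)) (hii_xx'.sub hii_shift)
        (hDii (u i) (u (i+1)) (huiI i).1.le
          (le_trans (hu (show i + 1 ≤ n by omega)) hunτ) (hu (Nat.le_succ i)))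
        fun y hy => ?_
      calc φ y - φ (y + τ) ≤ |φ y - φ (y + τ)| := le_abs_self _
        _ ≤ dist (f' y) (f' (y + τ)) := abs_dist_sub_le _ _ _
    have h5 : dist (f' (u (i + 1))) (f' (u i)) ≤ φ (u i) - φ (u (i + 1)) + 2 * ε' := by
      have ht1 : dist (f' (u (i+1))) (f' (u i)) ≤ dist (f' (u (i+1))) e + dist e (f' (u i)) :=
        dist_triangle _ _ _
      have ht2 : dist e (f' (u i)) = φ (u i) := dist_comm _ _
      have ht3 : dist (f' (u (i+1))) e = φ (u (i+1)) := rfl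
      linarith [hed]
    have hAx := abs_le.mp (hA i (by omega))
    have hAx' := abs_le.mp (hA (i+1) (by omega))
    have h6 : τ * (φ (u i) - φ (u (i + 1)))
        ≤ 2 * ε' * τ + ∫ y in (u i)..(u (i+1)), (φ y - φ (y + τ)) := by
      nlinarith [hAx.1, hAx.2, hAx'.1, hAx'.2, htel]
    have h7 := mul_le_mul_of_nonneg_left h5 hτ0.le
    calc τ * dist (f' (u (i + 1))) (f' (u i))
        ≤ τ * (φ (u i) - φ (u (i + 1)) + 2 * ε') := h7
      _ = τ * (φ (u i) - φ (u (i + 1))) + 2 * ε' * τ := by ring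
      _ ≤ (2 * ε' * τ + ∫ y in (u i)..(u (i+1)), (φ y - φ (y + τ))) + 2 * ε' * τ := by
          linarith [h6]
      _ ≤ 4 * ε' * τ + ∫ y in (u i)..(u (i + 1)), dist (f' y) (f' (y + τ)) := by
          linarith [hmono]
  have hsumii : ∀ k < n, IntervalIntegrable (fun y => dist (f' y) (f' (y + τ))) volume
      (u k) (u (k+1)) := fun k hk =>
    hDii (u k) (u (k+1)) (huiI k).1.le
      (le_trans (hu (show k + 1 ≤ n by omega)) hunτ) (hu (Nat.le_succ k))
  have hsum := intervalIntegral.sum_integral_adjacent_intervals hsumii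
  have htot : τ * (∑ i ∈ Finset.range n, dist (f' (u (i + 1))) (f' (u i)))
      ≤ 4 * ε' * τ * n + ∫ y in (u 0)..(u n), dist (f' y) (f' (y + τ)) := by
    rw [← hsum, Finset.mul_sum]
    calc ∑ i ∈ Finset.range n, τ * dist (f' (u (i + 1))) (f' (u i))
        ≤ ∑ i ∈ Finset.range n,
            (4 * ε' * τ + ∫ y in (u i)..(u (i+1)), dist (f' y) (f' (y + τ))) :=
          Finset.sum_le_sum fun i hi => main i (Finset.mem_range.mp hi)
      _ = 4 * ε' * τ * n
          + ∑ i ∈ Finset.range n, ∫ y in (u i)..(u (i+1)), dist (f' y) (f' (y + τ)) := by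
          rw [Finset.sum_add_distrib, Finset.sum_const, Finset.card_range, nsmul_eq_mul]
          ring
  have hlast : (∫ y in (u 0)..(u n), dist (f' y) (f' (y + τ)))
      ≤ ∫ y in Set.Icc s (t - τ), dist (f' y) (f' (y + τ)) := by
    rw [intervalIntegral.integral_of_le (hu (Nat.zero_le n))]
    refine setIntegral_mono_set hDint ?_ ?_
    · exact ae_restrict_of_forall_mem measurableSet_Icc fun y _ => dist_nonneg
    · refine HasSubset.Subset.eventuallyLE fun y hy => ?_
      exact ⟨le_of_lt (lt_trans (huiI 0).1 hy.1), le_trans hy.2 hunτ⟩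
  have hSτ := hS τ ⟨hτ0, hτts⟩
  have hdiv : τ * (∑ i ∈ Finset.range n, dist (f' (u (i + 1))) (f' (u i)))
      ≤ τ * (Sr + 4 * ε' * n) := by
    calc τ * (∑ i ∈ Finset.range n, dist (f' (u (i + 1))) (f' (u i)))
        ≤ 4 * ε' * τ * n + ∫ y in (u 0)..(u n), dist (f' y) (f' (y + τ)) := htot
      _ ≤ 4 * ε' * τ * n + τ * Sr := by linarith [le_trans hlast hSτ]
      _ = τ * (Sr + 4 * ε' * n) := by ring
  have hfin : (∑ i ∈ Finset.range n, dist (f' (u (i + 1))) (f' (u i))) ≤ Sr + 4 * ε' * n :=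
    le_of_mul_le_mul_left hdiv hτ0
  have hεbnd : 4 * ε' * n ≤ ε := by
    have h4n1 : (0:ℝ) < 4 * (n:ℝ) + 1 := by positivity
    have heq : 4 * ε' * (n:ℝ) = ε * ((4 * n) / (4 * n + 1)) := by
      rw [hε'def]; field_simp
    rw [heq]
    nth_rewrite 2 [← mul_one ε]
    refine mul_le_mul_of_nonneg_left ?_ hε.le
    rw [div_le_one h4n1]
    linarith
  linarith

end EssVarAux

open EssVarAux

/-- For a Borel measurable, separably valued, integrable `f : [a,b] → N` into a complete
metric space: (i) `essVar(f;(a,b)) < ∞` iff `sup_{0<τ<b−a} ∫_a^{b−τ} d(f(t),f(t+τ))/τ dt < ∞`;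
(ii) if these are finite, then for all `a ≤ s < t ≤ b`,
`essVar(f;(s,t)) = sup_{0<τ<t−s} ∫_s^{t−τ} d(f(u),f(u+τ))/τ du`. -/
theorem stmt3 {N : Type*} [MetricSpace N] [MeasurableSpace N] [BorelSpace N] [CompleteSpace N]
    (a b : ℝ) (hab : a < b) (f : ℝ → N)
    (hmeas : Measurable ((Set.Icc a b).restrict f))
    (hsep : TopologicalSpace.IsSeparable (f '' Set.Icc a b))
    (y₀ : N) (hfin : ∫⁻ t in Set.Icc a b, edist (f t) y₀ < ∞) :
    (essVar f (Set.Ioo a b) ≠ ∞ ↔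
      (⨆ τ ∈ Set.Ioo (0:ℝ) (b - a),
          ∫⁻ t in Set.Icc a (b - τ), edist (f t) (f (t + τ)) / ENNReal.ofReal τ) ≠ ∞) ∧
    (essVar f (Set.Ioo a b) ≠ ∞ →
      ∀ s t : ℝ, a ≤ s → s < t → t ≤ b →
        essVar f (Set.Ioo s t)
          = ⨆ τ ∈ Set.Ioo (0:ℝ) (t - s),
              ∫⁻ u in Set.Icc s (t - τ), edist (f u) (f (u + τ)) / ENNReal.ofReal τ) := by
  classical
  set f' : ℝ → N := fun x => (Set.Icc a b).restrict f (Set.projIcc a b hab.le x) with hf'def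
  have hf'eq : ∀ x ∈ Set.Icc a b, f' x = f x := fun x hx => by
    simp [hf'def, Set.restrict, Set.projIcc_of_mem hab.le hx]
  have hf'm : Measurable f' := hmeas.comp continuous_projIcc.measurable
  have hf'img : f' '' Set.Icc a b = f '' Set.Icc a b :=
    Set.image_congr fun x hx => hf'eq x hx
  have hrange : Set.range f' ⊆ f '' Set.Icc a b := by
    rintro _ ⟨x, rfl⟩
    exact ⟨(Set.projIcc a b hab.le x : ℝ), (Set.projIcc a b hab.le x).2, rfl⟩
  have hsepr : TopologicalSpace.IsSeparable (Set.range f') := hsep.mono hrange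
  obtain ⟨c, hccount, hcsub0⟩ := hsep
  have hcsub : f' '' Set.Icc a b ⊆ closure c := by rw [hf'img]; exact hcsub0
  have hf'sm : StronglyMeasurable f' :=
    stronglyMeasurable_iff_measurable_separable.mpr ⟨hf'm, hsepr⟩
  have hDsm : ∀ τ' : ℝ, StronglyMeasurable fun y => dist (f' y) (f' (y + τ')) := fun τ' =>
    continuous_dist.comp_stronglyMeasurable
      (hf'sm.prodMk (hf'sm.comp_measurable (measurable_add_const τ')))
  have hdist_meas : Measurable fun y => dist (f' y) y₀ :=
    (continuous_id.dist continuous_const).measurable.comp hf'm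
  have hintd : IntegrableOn (fun y => dist (f' y) y₀) (Set.Icc a b) volume := by
    refine ⟨hdist_meas.aestronglyMeasurable.restrict, ?_⟩
    rw [hasFiniteIntegral_iff_ofReal (Filter.Eventually.of_forall fun y => dist_nonneg)]
    have h1 : (∫⁻ y in Set.Icc a b, ENNReal.ofReal (dist (f' y) y₀))
        = ∫⁻ y in Set.Icc a b, edist (f y) y₀ := by
      refine setLIntegral_congr_fun measurableSet_Icc
        (fun y hy => ?_)
      rw [← edist_dist, hf'eq y hy]
    rw [h1]
    exact hfin
  have hint2 : ∀ e ∈ c, Integrable ((Set.Icc a b).indicator fun y => dist (f' y) e) volume := by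
    intro e _
    rw [integrable_indicator_iff measurableSet_Icc]
    refine Integrable.mono'
      ((hintd.add ((integrableOn_const_iff).mpr (Or.inr measure_Icc_lt_top)) :
        IntegrableOn (fun y => dist (f' y) y₀ + dist y₀ e) _ _))
      (((continuous_id.dist continuous_const).measurable.comp hf'm).aestronglyMeasurable) ?_
    refine ae_restrict_of_forall_mem measurableSet_Icc fun y _ => ?_
    rw [Real.norm_eq_abs, abs_of_nonneg dist_nonneg]
    exact dist_triangle _ _ _
  have hleb := leb_points hf'm hab hccount hcsub hint2
  have key : ∀ s t : ℝ, a ≤ s → s < t → t ≤ b →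
      essVar f (Set.Ioo s t)
        = ⨆ τ ∈ Set.Ioo (0:ℝ) (t - s),
            ∫⁻ u in Set.Icc s (t - τ), edist (f u) (f (u + τ)) / ENNReal.ofReal τ := by
    intro s t has hst htb
    have hSeq : (⨆ τ ∈ Set.Ioo (0:ℝ) (t - s),
          ∫⁻ u in Set.Icc s (t - τ), edist (f u) (f (u + τ)) / ENNReal.ofReal τ)
        = ⨆ τ ∈ Set.Ioo (0:ℝ) (t - s),
            ∫⁻ u in Set.Icc s (t - τ), edist (f' u) (f' (u + τ)) / ENNReal.ofReal τ := by
      refine biSup_congr fun τ hτ => ?_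
      refine setLIntegral_congr_fun measurableSet_Icc
        (fun y hy => ?_)
      rw [hf'eq y ⟨by linarith [hy.1], by linarith [hy.2, hτ.1]⟩,
        hf'eq (y + τ) ⟨by linarith [hy.1, hτ.1], by linarith [hy.2]⟩]
    have hffae : f =ᵐ[volume.restrict (Set.Ioo s t)] f' :=
      ae_restrict_of_forall_mem measurableSet_Ioo fun x hx =>
        (hf'eq x ⟨by linarith [hx.1], by linarith [hx.2]⟩).symm
    have hessVar_eq : essVar f (Set.Ioo s t) = essVar f' (Set.Ioo s t) := by
      unfold essVar
      apply le_antisymm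
      · exact le_iInf₂ fun g hg => iInf₂_le g (hffae.trans hg)
      · exact le_iInf₂ fun g hg => iInf₂_le g (hffae.symm.trans hg)
    rw [hessVar_eq, hSeq]
    set S' := ⨆ τ ∈ Set.Ioo (0:ℝ) (t - s),
      ∫⁻ u in Set.Icc s (t - τ), edist (f' u) (f' (u + τ)) / ENNReal.ofReal τ with hS'def
    apply le_antisymm
    · by_cases hStop : S' = ∞
      · rw [hStop]; exact le_top
      set Sr := S'.toReal with hSrdef
      have hedmeas : ∀ τ' : ℝ, Measurable fun y => edist (f' y) (f' (y + τ')) := by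
        intro τ'
        have heq : (fun y => edist (f' y) (f' (y + τ')))
            = fun y => ENNReal.ofReal (dist (f' y) (f' (y + τ'))) := by
          funext y; rw [edist_dist]
        rw [heq]
        exact ENNReal.measurable_ofReal.comp (hDsm τ').measurable
      have hlin : ∀ τ ∈ Set.Ioo (0:ℝ) (t - s),
          (∫⁻ u in Set.Icc s (t - τ), edist (f' u) (f' (u + τ)))
            ≤ ENNReal.ofReal τ * S' := by
        intro τ hτ
        have h1 : (∫⁻ u in Set.Icc s (t - τ), edist (f' u) (f' (u + τ)) / ENNReal.ofReal τ)
            ≤ S' := le_iSup₂_of_le τ hτ le_rfl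
        have h2 : (∫⁻ u in Set.Icc s (t - τ), edist (f' u) (f' (u + τ)) / ENNReal.ofReal τ)
            = (∫⁻ u in Set.Icc s (t - τ), edist (f' u) (f' (u + τ))) / ENNReal.ofReal τ := by
          simp only [div_eq_mul_inv]
          exact lintegral_mul_const _ (hedmeas τ)
        rw [h2, ENNReal.div_le_iff_le_mul (Or.inl (ENNReal.ofReal_pos.mpr hτ.1).ne')
          (Or.inl ENNReal.ofReal_ne_top)] at h1
        exact h1.trans (le_of_eq (mul_comm _ _))
      have hSreal : ∀ τ ∈ Set.Ioo (0:ℝ) (t - s),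
          (∫ y in Set.Icc s (t - τ), dist (f' y) (f' (y + τ))) ≤ τ * Sr := by
        intro τ hτ
        have heq : (∫ y in Set.Icc s (t - τ), dist (f' y) (f' (y + τ)))
            = (∫⁻ y in Set.Icc s (t - τ), edist (f' y) (f' (y + τ))).toReal := by
          rw [integral_eq_lintegral_of_nonneg_ae
            (Filter.Eventually.of_forall fun y => dist_nonneg)
            ((hDsm τ).aestronglyMeasurable.restrict)]
          congr 1
          exact lintegral_congr fun y => (edist_dist _ _).symm
        rw [heq]
        have hfin2 : ENNReal.ofReal τ * S' ≠ ∞ :=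
          ENNReal.mul_ne_top ENNReal.ofReal_ne_top hStop
        calc (∫⁻ y in Set.Icc s (t - τ), edist (f' y) (f' (y + τ))).toReal
            ≤ (ENNReal.ofReal τ * S').toReal := ENNReal.toReal_mono hfin2 (hlin τ hτ)
          _ = τ * Sr := by rw [ENNReal.toReal_mul, ENNReal.toReal_ofReal hτ.1.le]
      set L : Set ℝ := {x | x ∈ Set.Ioo s t ∧ ∀ ε : ℝ, 0 < ε → ∀ᶠ τ in 𝓝[>] (0:ℝ),
        (∫ y in x..(x + τ), dist (f' y) (f' x)) ≤ ε * τ} with hLdef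
      have hLsub : L ⊆ Set.Ioo s t := fun x hx => hx.1
      have hLfull : volume (Set.Ioo s t \ L) = 0 := by
        have hnull : volume {x | ¬ (x ∈ Set.Ioo a b → ∀ ε : ℝ, 0 < ε →
            ∀ᶠ τ in 𝓝[>] (0:ℝ), (∫ y in x..(x + τ), dist (f' y) (f' x)) ≤ ε * τ)} = 0 :=
          ae_iff.mp hleb
        refine measure_mono_null (fun x hx => ?_) hnull
        intro hcon
        exact hx.2 ⟨hx.1, hcon ⟨lt_of_le_of_lt has hx.1.1, lt_of_lt_of_le hx.1.2 htb⟩⟩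
      have hvarL : eVariationOn f' L ≤ S' := by
        apply iSup_le
        rintro ⟨n, u, hu, huL⟩
        have hreal := key_sum hf'm hsepr has hst htb hcsub hintd hSreal hLsub
          (fun x hx => hx.2) n u hu huL
        calc ∑ i ∈ Finset.range n, edist (f' (u (i+1))) (f' (u i))
            = ENNReal.ofReal (∑ i ∈ Finset.range n, dist (f' (u (i+1))) (f' (u i))) := by
              rw [ENNReal.ofReal_sum_of_nonneg fun i _ => dist_nonneg]
              exact Finset.sum_congr rfl fun i _ => edist_dist _ _
          _ ≤ ENNReal.ofReal Sr := ENNReal.ofReal_le_ofReal hreal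
          _ ≤ S' := by rw [hSrdef]; exact ENNReal.ofReal_toReal_le
      obtain ⟨g, hgeq, hgvar⟩ := exists_extension f' hst L hLsub hLfull
      have hgae : f' =ᵐ[volume.restrict (Set.Ioo s t)] g := by
        refine ae_restrict_of_ae (ae_iff.mpr ?_)
        refine measure_mono_null (fun x hx => ?_) hLfull
        by_contra hxn
        exact hx (hgeq x hxn).symm
      calc essVar f' (Set.Ioo s t) ≤ eVariationOn g (Set.Ioo s t) := by
            unfold essVar
            exact iInf₂_le g hgae
        _ ≤ eVariationOn f' L := hgvar
        _ ≤ S' := hvarL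
    · unfold essVar
      exact le_iInf₂ fun g hg => iSup₂_le fun τ hτ => easy_dir g hg ⟨hτ.1, hτ.2⟩
  constructor
  · rw [key a b le_rfl hab le_rfl]
  · intro _ s t hs hst hts
    exact key s t hs hst hts
end
end
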